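/- arXiv:1808.09038 — 6 statements merged into one kernel-verified Lean document; each statement's English description precedes it below -/
import Mathlib

section
/- Suppose the scenario set σ contains the no-contingency scenario s₀ (i.e., ζ(s₀)_i = 1 for all i ∈ I). Then the worst-case expected load shedding over the ambiguity set equals the optimal value of the dual min–max problem: sup_{p ∈ D} Σ_{s∈σ} p(s)·Q(s) = inf over all β : I → ℝ with β_i ≥ 0 for all i of max_{s∈σ} [ Q(s) + Σ_{i∈I} (μ_i + ζ(s)_i − 1)·β_i ]; moreover both the supremum and the infimum are attained. -/
open Finset
open scoped InnerProductSpace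

lemma conic_carath {H : Type*} [AddCommGroup H] [Module ℝ H] {G : Type*} [Fintype G]
    [DecidableEq G] (v : G → H) :
    ∀ (n : ℕ) (y : G → ℝ), (univ.filter fun g => y g ≠ 0).card ≤ n → (∀ g, 0 ≤ y g) →
    ∃ T : Finset G, (LinearIndependent ℝ fun t : T => v t) ∧
      ∃ z : G → ℝ, (∀ g, 0 ≤ z g) ∧ (∀ g, g ∉ T → z g = 0) ∧
        ∑ g, z g • v g = ∑ g, y g • v g := by
  intro n
  induction n with
  | zero =>
    intro y hcard hy
    have hz : ∀ g, y g = 0 := by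
      intro g
      by_contra hg
      have : g ∈ univ.filter fun g => y g ≠ 0 := by simp [hg]
      have := card_pos.mpr ⟨g, this⟩
      omega
    exact ⟨∅, linearIndependent_empty_type, y, hy, fun g _ => hz g, rfl⟩
  | succ n ih =>
    intro y hcard hy
    set S := univ.filter fun g => y g ≠ 0 with hS
    by_cases hli : LinearIndependent ℝ fun t : S => v t
    · refine ⟨S, hli, y, hy, fun g hg => ?_, rfl⟩
      by_contra h
      exact hg (by simp [hS, h])
    · obtain ⟨c, hcsum, t₀, ht₀⟩ := Fintype.not_linearIndependent_iff.mp hli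
      have key : ∀ c : S → ℝ, (∑ t : S, c t • v t = 0) → (∃ t, 0 < c t) →
          ∃ T : Finset G, (LinearIndependent ℝ fun t : T => v t) ∧
          ∃ z : G → ℝ, (∀ g, 0 ≤ z g) ∧ (∀ g, g ∉ T → z g = 0) ∧
            ∑ g, z g • v g = ∑ g, y g • v g := by
        intro c hcsum ⟨t₁, ht₁⟩
        classical
        set C : G → ℝ := fun g => if h : g ∈ S then c ⟨g, h⟩ else 0 with hC
        have hCS : ∀ g, g ∉ S → C g = 0 := fun g hg => by simp [hC, hg]
        have hCsum : ∑ g, C g • v g = 0 := by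
          rw [← Finset.sum_filter_of_ne (p := fun g => g ∈ S)
            (by intro g _ hg; by_contra h; exact hg (by simp [hCS g h]))]
          rw [Finset.filter_mem_eq_inter, Finset.univ_inter]
          rw [← hcsum, ← Finset.sum_attach S (fun g => C g • v g)]
          refine Finset.sum_congr rfl fun t _ => ?_
          simp [hC, t.2]
        have hCt₁ : 0 < C (t₁ : G) := by simpa [hC, t₁.2] using ht₁
        set P := univ.filter fun g => 0 < C g with hP
        have hPne : P.Nonempty := ⟨t₁, by simp [hP, hCt₁]⟩
        obtain ⟨g₀, hg₀P, hg₀min⟩ := P.exists_min_image (fun g => y g / C g) hPne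
        have hg₀pos : 0 < C g₀ := by simpa [hP] using hg₀P
        set lam := y g₀ / C g₀ with hlam
        have hlam0 : 0 ≤ lam := div_nonneg (hy g₀) hg₀pos.le
        set z : G → ℝ := fun g => y g - lam * C g with hzdef
        have hznn : ∀ g, 0 ≤ z g := by
          intro g
          by_cases hgc : 0 < C g
          · have := hg₀min g (by simp [hP, hgc])
            have : lam * C g ≤ (y g / C g) * C g := by
              exact mul_le_mul_of_nonneg_right this hgc.le
            rw [div_mul_cancel₀ _ hgc.ne'] at this
            simp [hzdef]; linarith
          · push_neg at hgc
            have : lam * C g ≤ 0 := mul_nonpos_of_nonneg_of_nonpos hlam0 hgc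
            have := hy g
            simp [hzdef]; linarith
        have hzg₀ : z g₀ = 0 := by
          simp [hzdef, hlam, div_mul_cancel₀ _ hg₀pos.ne']
        have hzsum : ∑ g, z g • v g = ∑ g, y g • v g := by
          simp only [hzdef, sub_smul, Finset.sum_sub_distrib, mul_smul]
          rw [← Finset.smul_sum, hCsum, smul_zero, sub_zero]
        have hzsupp : (univ.filter fun g => z g ≠ 0) ⊆ S.erase g₀ := by
          intro g hg
          simp only [mem_filter, mem_univ, true_and] at hg
          refine Finset.mem_erase.mpr ⟨?_, ?_⟩
          · rintro rfl; exact hg hzg₀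
          · by_contra hgS
            exact hg (by simp [hzdef, hy, hCS g hgS, (by simpa [hS] using hgS : y g = 0)])
        have hg₀S : g₀ ∈ S := by
          by_contra hgS
          exact absurd (hCS g₀ hgS) hg₀pos.ne'
        have hcard' : (univ.filter fun g => z g ≠ 0).card ≤ n := by
          have h1 : (S.erase g₀).card < S.card := Finset.card_erase_lt_of_mem hg₀S
          have h2 := Finset.card_le_card hzsupp
          omega
        obtain ⟨T, hT, z', hz'⟩ := ih z hcard' hznn
        exact ⟨T, hT, z', hz'.1, hz'.2.1, hz'.2.2.trans hzsum⟩
      by_cases hpos : ∃ t, 0 < c t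
      · exact key c hcsum hpos
      · push_neg at hpos
        refine key (fun t => -c t) ?_ ⟨t₀, ?_⟩
        · simp only [neg_smul, Finset.sum_neg_distrib, hcsum, neg_zero]
        · show 0 < -c t₀
          cases' lt_or_eq_of_le (hpos t₀) with h h
          · linarith
          · exact absurd h ht₀

lemma cone_closed_of_indep {H : Type*} [NormedAddCommGroup H] [NormedSpace ℝ H]
    [FiniteDimensional ℝ H] {G : Type*} [Fintype G] [DecidableEq G]
    (v : G → H) (T : Finset G) (hT : LinearIndependent ℝ fun t : T => v t) :
    IsClosed {x : H | ∃ z : G → ℝ, (∀ g, 0 ≤ z g) ∧ (∀ g, g ∉ T → z g = 0) ∧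
      x = ∑ g, z g • v g} := by
  classical
  let L : (T → ℝ) →ₗ[ℝ] H :=
    { toFun := fun w => ∑ t : T, w t • v t
      map_add' := by intro a b; simp [add_smul, Finset.sum_add_distrib]
      map_smul' := by intro m a; simp [smul_smul, Finset.smul_sum] }
  have hLinj : LinearMap.ker L = ⊥ := by
    rw [LinearMap.ker_eq_bot']
    intro w hw
    funext t
    exact Fintype.linearIndependent_iff.mp hT w hw t
  have hemb := LinearMap.isClosedEmbedding_of_injective (𝕜 := ℝ) hLinj
  have horth : IsClosed {w : T → ℝ | ∀ t, 0 ≤ w t} := by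
    have : {w : T → ℝ | ∀ t, 0 ≤ w t} = ⋂ t : T, {w | 0 ≤ w t} :=
      by ext w; simp
    rw [this]
    exact isClosed_iInter fun t => isClosed_le continuous_const (continuous_apply t)
  have himg : {x : H | ∃ z : G → ℝ, (∀ g, 0 ≤ z g) ∧ (∀ g, g ∉ T → z g = 0) ∧
      x = ∑ g, z g • v g} = L '' {w : T → ℝ | ∀ t, 0 ≤ w t} := by
    ext x
    constructor
    · rintro ⟨z, hz0, hzT, rfl⟩
      refine ⟨fun t => z t, fun t => hz0 t, ?_⟩
      show ∑ t : T, z t • v t = ∑ g, z g • v g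
      rw [Finset.sum_coe_sort T (fun g => z g • v g)]
      exact Finset.sum_subset (Finset.subset_univ T) (by intro g _ hg; simp [hzT g hg])
    · rintro ⟨w, hw, rfl⟩
      refine ⟨fun g => if h : g ∈ T then w ⟨g, h⟩ else 0, ?_, ?_, ?_⟩
      · intro g
        by_cases h : g ∈ T
        · simpa [h] using hw ⟨g, h⟩
        · simp [h]
      · intro g hg; simp [hg]
      · show (∑ t : T, w t • v t) = _
        rw [← Finset.sum_subset (Finset.subset_univ T)
          (by intro g _ hg; simp [hg])]
        rw [← Finset.sum_coe_sort T (fun g => (if h : g ∈ T then w ⟨g, h⟩ else 0) • v g)]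
        refine Finset.sum_congr rfl fun t _ => by simp
  rw [himg]
  exact hemb.isClosedMap _ horth

lemma cone_isClosed {H : Type*} [NormedAddCommGroup H] [NormedSpace ℝ H]
    [FiniteDimensional ℝ H] {G : Type*} [Fintype G] [DecidableEq G] (v : G → H) :
    IsClosed {x : H | ∃ y : G → ℝ, (∀ g, 0 ≤ y g) ∧ x = ∑ g, y g • v g} := by
  classical
  have hun : {x : H | ∃ y : G → ℝ, (∀ g, 0 ≤ y g) ∧ x = ∑ g, y g • v g} =
      ⋃ T ∈ {T : Finset G | LinearIndependent ℝ fun t : T => v t},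
        {x | ∃ z : G → ℝ, (∀ g, 0 ≤ z g) ∧ (∀ g, g ∉ T → z g = 0) ∧ x = ∑ g, z g • v g} := by
    ext x
    simp only [Set.mem_setOf_eq, Set.mem_iUnion]
    constructor
    · rintro ⟨y, hy, rfl⟩
      obtain ⟨T, hT, z, hz0, hzT, hzsum⟩ := conic_carath v _ y le_rfl hy
      exact ⟨T, hT, z, hz0, hzT, hzsum.symm⟩
    · rintro ⟨T, hT, z, hz0, hzT, rfl⟩
      exact ⟨z, hz0, rfl⟩
  rw [hun]
  exact Set.Finite.isClosed_biUnion (Set.toFinite _)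
    (fun T hT => cone_closed_of_indep v T hT)

lemma farkas_ineq {I σ : Type*} [Fintype I] [Fintype σ] (M : σ → I → ℝ) (q : σ → ℝ)
    (h : ∀ p : σ → ℝ, (∀ s, 0 ≤ p s) → (∀ i, (∑ s, p s * M s i) ≤ 0) →
      (∑ s, p s * q s) ≤ 0) :
    ∃ β : I → ℝ, (∀ i, 0 ≤ β i) ∧ ∀ s, q s ≤ ∑ i, M s i * β i := by
  classical
  let v : (I ⊕ σ) → EuclideanSpace ℝ σ :=
    Sum.elim (fun i => (WithLp.toLp 2 (fun s => M s i) : EuclideanSpace ℝ σ))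
             (fun s' => (WithLp.toLp 2 (fun s => if s = s' then (-1 : ℝ) else 0) : EuclideanSpace ℝ σ))
  let C : Set (EuclideanSpace ℝ σ) :=
    {x | ∃ y : (I ⊕ σ) → ℝ, (∀ g, 0 ≤ y g) ∧ x = ∑ g, y g • v g}
  have heval : ∀ (y : (I ⊕ σ) → ℝ) (s : σ), (∑ g, y g • v g) s = ∑ g, y g * v g s := by
    intro y s
    calc (∑ g, y g • v g) s = ∑ g, (y g • v g) s :=
          map_sum (EuclideanSpace.proj (𝕜 := ℝ) s) _ Finset.univ
      _ = ∑ g, y g * v g s := rfl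
  have hinner : ∀ x w : EuclideanSpace ℝ σ, ⟪x, w⟫_ℝ = ∑ s, x s * w s := by
    intro x w; simp [PiLp.inner_apply, RCLike.inner_apply]
    exact Finset.sum_congr rfl fun _ _ => mul_comm _ _
  have hgen : ∀ g, v g ∈ C := by
    intro g
    refine ⟨fun g' => if g' = g then 1 else 0, fun g' => by positivity, ?_⟩
    simp [Finset.sum_ite_eq']
  have hqC : (WithLp.toLp 2 q : EuclideanSpace ℝ σ) ∈ C := by
    by_contra hq
    let K : ConvexCone ℝ (EuclideanSpace ℝ σ) :=
      { carrier := C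
        smul_mem' := by
          rintro c hc x ⟨y, hy, rfl⟩
          exact ⟨fun g => c * y g, fun g => mul_nonneg hc.le (hy g),
            by rw [Finset.smul_sum]; simp [smul_smul]⟩
        add_mem' := by
          rintro x ⟨y, hy, rfl⟩ x' ⟨y', hy', rfl⟩
          exact ⟨y + y', fun g => add_nonneg (hy g) (hy' g),
            by simp [add_smul, Finset.sum_add_distrib]⟩ }
    have h0 : (0 : EuclideanSpace ℝ σ) ∈ C := ⟨0, by simp, by simp⟩
    have hclosed : IsClosed ((K : ConvexCone ℝ (EuclideanSpace ℝ σ)) : Set (EuclideanSpace ℝ σ)) :=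
      cone_isClosed v
    let P : ProperCone ℝ (EuclideanSpace ℝ σ) :=
      ⟨K.toPointedCone (ConvexCone.Pointed.of_nonempty_of_isClosed ⟨0, h0⟩ hclosed), hclosed⟩
    obtain ⟨w, hw1, hw2⟩ :=
      ProperCone.hyperplane_separation' P (show _ ∉ P from hq)
    rw [real_inner_comm] at hw2
    set p : σ → ℝ := fun s => -(w s) with hp
    have hpnn : ∀ s, 0 ≤ p s := by
      intro s
      have h1 := hw1 _ (hgen (Sum.inr s))
      rw [hinner] at h1
      have h2 : (∑ t, (v (Sum.inr s)) t * w t) = -(w s) := by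
        have : ∀ t, (v (Sum.inr s)) t * w t = (if t = s then (-1:ℝ) else 0) * w t :=
          fun t => rfl
        rw [Finset.sum_congr rfl fun t _ => this t, Finset.sum_eq_single s]
        · simp
        · intro b _ hb; simp [hb]
        · simp
      rw [h2] at h1
      simpa [hp] using h1
    have hM : ∀ i, (∑ s, p s * M s i) ≤ 0 := by
      intro i
      have h1 := hw1 _ (hgen (Sum.inl i))
      rw [hinner] at h1
      have h2 : (∑ s, p s * M s i) = -(∑ s, (v (Sum.inl i)) s * w s) := by
        rw [← Finset.sum_neg_distrib]
        refine Finset.sum_congr rfl fun s _ => ?_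
        show -(w s) * M s i = -(M s i * w s)
        ring
      rw [h2]
      linarith
    have hQ := h p hpnn hM
    rw [hinner] at hw2
    have h3 : (∑ s, p s * q s) = -(∑ s, w s * q s) := by
      rw [← Finset.sum_neg_distrib]
      refine Finset.sum_congr rfl fun s _ => ?_
      show -(w s) * q s = -(w s * q s)
      ring
    rw [h3] at hQ
    have : (∑ s, w s * (WithLp.toLp 2 q : EuclideanSpace ℝ σ) s) = ∑ s, w s * q s := rfl
    rw [this] at hw2
    linarith
  obtain ⟨y, hy, hsum⟩ := hqC
  refine ⟨fun i => y (Sum.inl i), fun i => hy _, fun s => ?_⟩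
  have hq : q s = ∑ i, y (Sum.inl i) * M s i + ∑ s', y (Sum.inr s') * (if s = s' then (-1:ℝ) else 0) := by
    have := heval y s
    rw [← hsum, WithLp.ofLp_toLp] at this
    rw [this, Fintype.sum_sum_type]
    rfl
  rw [hq]
  have h2 : ∑ s', y (Sum.inr s') * (if s = s' then (-1:ℝ) else 0) = -(y (Sum.inr s)) := by
    rw [Finset.sum_eq_single s]
    · simp
    · intro b _ hb; simp [Ne.symm hb]
    · simp
  rw [h2]
  have : ∑ i, y (Sum.inl i) * M s i = ∑ i, M s i * y (Sum.inl i) := by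
    exact Finset.sum_congr rfl fun i _ => mul_comm _ _
  rw [this]
  linarith [hy (Sum.inr s)]

/-- Strong duality (Proposition 1) for the moment-based ambiguity set:
the worst-case expected load shedding equals the optimal value of the dual
min–max problem, and both the supremum and the infimum are attained. -/
theorem stmt_0
    {I σ : Type*} [Fintype I] [Fintype σ] [Nonempty I] [Nonempty σ]
    (ζ : σ → I → ℝ) (hζ : ∀ s i, ζ s i = 0 ∨ ζ s i = 1)
    (Q : σ → ℝ) (μ : I → ℝ) (hμ : ∀ i, 0 ≤ μ i)
    (D : Set (σ → ℝ))
    (hD : D = {p : σ → ℝ | (∀ s, 0 ≤ p s) ∧ (∑ s, p s) = 1 ∧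
        ∀ i, (∑ s, p s * (1 - ζ s i)) ≤ μ i})
    (s₀ : σ) (hs₀ : ∀ i, ζ s₀ i = 1) :
    ∃ v : ℝ,
      IsGreatest {x : ℝ | ∃ p ∈ D, x = ∑ s, p s * Q s} v ∧
      IsLeast {x : ℝ | ∃ β : I → ℝ, (∀ i, 0 ≤ β i) ∧
        x = ⨆ s : σ, (Q s + ∑ i, (μ i + ζ s i - 1) * β i)} v := by
  classical
  subst hD
  set D : Set (σ → ℝ) := {p : σ → ℝ | (∀ s, 0 ≤ p s) ∧ (∑ s, p s) = 1 ∧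
      ∀ i, (∑ s, p s * (1 - ζ s i)) ≤ μ i} with hDdef
  -- the no-contingency point mass is feasible
  have hp₀ : (fun s => if s = s₀ then (1:ℝ) else 0) ∈ D := by
    refine ⟨fun s => by positivity, by simp, fun i => ?_⟩
    have : (∑ s, (if s = s₀ then (1:ℝ) else 0) * (1 - ζ s i)) = 1 - ζ s₀ i := by
      rw [Finset.sum_eq_single s₀]
      · simp
      · intro b _ hb; simp [hb]
      · simp
    rw [this, hs₀ i]
    simpa using hμ i
  -- D is compact
  have hDclosed : IsClosed D := by
    have h1 : IsClosed {p : σ → ℝ | ∀ s, 0 ≤ p s} := by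
      have : {p : σ → ℝ | ∀ s, 0 ≤ p s} = ⋂ s, {p | 0 ≤ p s} := by ext p; simp
      rw [this]
      exact isClosed_iInter fun s => isClosed_le continuous_const (continuous_apply s)
    have h2 : IsClosed {p : σ → ℝ | (∑ s, p s) = 1} :=
      isClosed_eq (continuous_finset_sum _ fun s _ => continuous_apply s) continuous_const
    have h3 : IsClosed {p : σ → ℝ | ∀ i, (∑ s, p s * (1 - ζ s i)) ≤ μ i} := by
      have : {p : σ → ℝ | ∀ i, (∑ s, p s * (1 - ζ s i)) ≤ μ i} =
          ⋂ i, {p | (∑ s, p s * (1 - ζ s i)) ≤ μ i} := by ext p; simp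
      rw [this]
      exact isClosed_iInter fun i => isClosed_le
        (continuous_finset_sum _ fun s _ => (continuous_apply s).mul continuous_const)
        continuous_const
    have : D = {p : σ → ℝ | ∀ s, 0 ≤ p s} ∩ ({p | (∑ s, p s) = 1} ∩
        {p | ∀ i, (∑ s, p s * (1 - ζ s i)) ≤ μ i}) := by
      ext p; simp [hDdef, Set.mem_setOf_eq, and_assoc]
    rw [this]
    exact h1.inter (h2.inter h3)
  have hDsub : D ⊆ Set.pi Set.univ (fun _ : σ => Set.Icc (0:ℝ) 1) := by
    rintro p ⟨hp0, hp1, -⟩ s _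
    refine ⟨hp0 s, ?_⟩
    rw [← hp1]
    exact Finset.single_le_sum (fun t _ => hp0 t) (Finset.mem_univ s)
  have hDcomp : IsCompact D :=
    IsCompact.of_isClosed_subset (isCompact_univ_pi fun _ => isCompact_Icc) hDclosed hDsub
  -- maximize the linear objective
  have hfc : Continuous fun p : σ → ℝ => ∑ s, p s * Q s :=
    continuous_finset_sum _ fun s _ => (continuous_apply s).mul continuous_const
  obtain ⟨pstar, hpD, hmax⟩ := hDcomp.exists_isMaxOn ⟨_, hp₀⟩ hfc.continuousOn
  have hpD' := hpD
  obtain ⟨hps0, hps1, hpsc⟩ := hpD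
  set v : ℝ := ∑ s, pstar s * Q s with hv
  have hmax' : ∀ p ∈ D, (∑ s, p s * Q s) ≤ v := fun p hp => hmax hp
  -- weak duality
  have key : ∀ β : I → ℝ, (∀ i, 0 ≤ β i) →
      v ≤ ⨆ s : σ, (Q s + ∑ i, (μ i + ζ s i - 1) * β i) := by
    intro β hβ
    set E : σ → ℝ := fun s => Q s + ∑ i, (μ i + ζ s i - 1) * β i with hE
    have hbdd : BddAbove (Set.range E) := Set.Finite.bddAbove (Set.finite_range E)
    have step1 : v ≤ ∑ s, pstar s * E s := by
      have hsplit : ∑ s, pstar s * E s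
          = v + ∑ s, pstar s * (∑ i, (μ i + ζ s i - 1) * β i) := by
        rw [hv, ← Finset.sum_add_distrib]
        exact Finset.sum_congr rfl fun s _ => by rw [hE]; ring
      have hterm : ∀ i, ∑ s, pstar s * ((μ i + ζ s i - 1) * β i)
          = (μ i - ∑ s, pstar s * (1 - ζ s i)) * β i := by
        intro i
        have h1 : ∑ s, pstar s * ((μ i + ζ s i - 1) * β i)
            = (∑ s, pstar s) * (μ i * β i) - (∑ s, pstar s * (1 - ζ s i)) * β i := by
          rw [Finset.sum_mul, Finset.sum_mul, ← Finset.sum_sub_distrib]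
          exact Finset.sum_congr rfl fun s _ => by ring
        rw [h1, hps1, one_mul]
        ring
      have h2 : ∑ s, pstar s * (∑ i, (μ i + ζ s i - 1) * β i)
          = ∑ i, (μ i - ∑ s, pstar s * (1 - ζ s i)) * β i := by
        simp_rw [Finset.mul_sum]
        rw [Finset.sum_comm]
        exact Finset.sum_congr rfl fun i _ => hterm i
      have h3 : 0 ≤ ∑ i, (μ i - ∑ s, pstar s * (1 - ζ s i)) * β i :=
        Finset.sum_nonneg fun i _ => mul_nonneg (sub_nonneg.mpr (hpsc i)) (hβ i)
      rw [hsplit, h2]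
      linarith
    have step2 : ∑ s, pstar s * E s ≤ ⨆ s, E s := by
      calc ∑ s, pstar s * E s ≤ ∑ s, pstar s * (⨆ t, E t) :=
            Finset.sum_le_sum fun s _ =>
              mul_le_mul_of_nonneg_left (le_ciSup hbdd s) (hps0 s)
        _ = ⨆ t, E t := by rw [← Finset.sum_mul, hps1, one_mul]
    exact step1.trans step2
  -- strong duality via Farkas
  have hfark : ∀ p : σ → ℝ, (∀ s, 0 ≤ p s) →
      (∀ i, (∑ s, p s * (1 - ζ s i - μ i)) ≤ 0) →
      (∑ s, p s * (Q s - v)) ≤ 0 := by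
    intro p hp0 hcon
    set t := ∑ s, p s with ht
    have ht0 : 0 ≤ t := Finset.sum_nonneg fun s _ => hp0 s
    rcases eq_or_lt_of_le ht0 with hteq | htpos
    · have hz : ∀ s ∈ Finset.univ, p s = 0 :=
        (Finset.sum_eq_zero_iff_of_nonneg fun s _ => hp0 s).mp hteq.symm
      rw [Finset.sum_eq_zero fun s hs => by rw [hz s hs, zero_mul]]
    · have hp'D : (fun s => p s / t) ∈ D := by
        refine ⟨fun s => div_nonneg (hp0 s) ht0, ?_, fun i => ?_⟩
        · rw [← Finset.sum_div, ← ht, div_self htpos.ne']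
        · have hci := hcon i
          have hexp : ∑ s, p s * (1 - ζ s i - μ i)
              = (∑ s, p s * (1 - ζ s i)) - μ i * t := by
            rw [ht, Finset.mul_sum, ← Finset.sum_sub_distrib]
            exact Finset.sum_congr rfl fun s _ => by ring
          rw [hexp] at hci
          calc ∑ s, p s / t * (1 - ζ s i)
              = (∑ s, p s * (1 - ζ s i)) / t := by
                rw [Finset.sum_div]
                exact Finset.sum_congr rfl fun s _ => by ring
            _ ≤ μ i := by
                rw [div_le_iff₀ htpos]
                linarith
      have hfp := hmax' _ hp'D
      have hQt : ∑ s, (p s / t) * Q s = (∑ s, p s * Q s) / t := by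
        rw [Finset.sum_div]
        exact Finset.sum_congr rfl fun s _ => by ring
      rw [hQt, div_le_iff₀ htpos] at hfp
      have hsplit : ∑ s, p s * (Q s - v) = (∑ s, p s * Q s) - v * t := by
        rw [ht, Finset.mul_sum, ← Finset.sum_sub_distrib]
        exact Finset.sum_congr rfl fun s _ => by ring
      rw [hsplit]
      linarith
  obtain ⟨β, hβnn, hβle⟩ := farkas_ineq (fun s i => 1 - ζ s i - μ i) (fun s => Q s - v) hfark
  refine ⟨v, ⟨⟨pstar, hpD', rfl⟩, ?_⟩, ⟨?_, ?_⟩⟩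
  · rintro x ⟨p, hp, rfl⟩
    exact hmax' p hp
  · -- v is attained by β
    refine ⟨β, hβnn, ?_⟩
    have hle : (⨆ s : σ, (Q s + ∑ i, (μ i + ζ s i - 1) * β i)) ≤ v := by
      refine ciSup_le fun s => ?_
      have h1 := hβle s
      have h2 : ∑ i, (μ i + ζ s i - 1) * β i = -∑ i, (1 - ζ s i - μ i) * β i := by
        rw [← Finset.sum_neg_distrib]
        exact Finset.sum_congr rfl fun i _ => by ring
      rw [h2]
      linarith
    exact (le_antisymm hle (key β hβnn)).symm
  · rintro x ⟨β', hβ', rfl⟩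
    exact key β' hβ'
end

section
/- Suppose the scenario set σ contains the no-contingency scenario s₀ (i.e., ζ(s₀)_i = 1 for all i ∈ I). Then sup_{p ∈ D} Σ_{s∈σ} p(s)·Q(s) equals the minimum of γ + Σ_{i∈I} μ_i·β_i over all γ ∈ ℝ and β : I → ℝ with β_i ≥ 0 for all i that satisfy γ + Σ_{i∈I} (1 − ζ(s)_i)·β_i ≥ Q(s) for every scenario s ∈ σ; moreover this minimum is attained. -/
open Finset

private lemma combo_lt' {la mb a b c d : ℝ} (hla : 0 ≤ la) (hmb : 0 ≤ mb)
    (hs : la + mb = 1) (h1 : a < b) (h2 : c < d) :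
    la * a + mb * c < la * b + mb * d := by
  rcases eq_or_lt_of_le hla with h | h
  · have hmb1 : mb = 1 := by linarith
    rw [← h, hmb1]; simpa using h2
  · exact add_lt_add_of_lt_of_le (mul_lt_mul_of_pos_left h1 h)
      (mul_le_mul_of_nonneg_left h2.le hmb)

/-- The worst-case expectation equals the minimum of
γ + Σ_i μ_i β_i over dual-feasible (γ, β), and this minimum is attained. -/
theorem stmt_1
    {I σ : Type*} [Fintype I] [Fintype σ] [Nonempty I] [Nonempty σ]
    (ζ : σ → I → ℝ) (hζ : ∀ s i, ζ s i = 0 ∨ ζ s i = 1)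
    (Q : σ → ℝ) (μ : I → ℝ) (hμ : ∀ i, 0 ≤ μ i)
    (D : Set (σ → ℝ))
    (hD : D = {p : σ → ℝ | (∀ s, 0 ≤ p s) ∧ (∑ s, p s) = 1 ∧
        ∀ i, (∑ s, p s * (1 - ζ s i)) ≤ μ i})
    (s₀ : σ) (hs₀ : ∀ i, ζ s₀ i = 1) :
    ∃ v : ℝ,
      IsLeast {x : ℝ | ∃ (γ : ℝ) (β : I → ℝ), (∀ i, 0 ≤ β i) ∧
          (∀ s, Q s ≤ γ + ∑ i, (1 - ζ s i) * β i) ∧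
          x = γ + ∑ i, μ i * β i} v ∧
      sSup {x : ℝ | ∃ p ∈ D, x = ∑ s, p s * Q s} = v := by
  classical
  subst hD
  set Dset : Set (σ → ℝ) := {p : σ → ℝ | (∀ s, 0 ≤ p s) ∧ (∑ s, p s) = 1 ∧
      ∀ i, (∑ s, p s * (1 - ζ s i)) ≤ μ i} with hDset
  -- basic facts about ζ
  have hznn : ∀ s i, (0:ℝ) ≤ 1 - ζ s i := by
    intro s i; rcases hζ s i with h | h <;> simp [h]
  -- Dirac measures
  set δ : σ → σ → ℝ := fun s' t => if t = s' then 1 else 0 with hδdef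
  have hδnn : ∀ s' t, 0 ≤ δ s' t := by
    intro s' t; by_cases h : t = s' <;> simp [hδdef, h]
  have hδsum : ∀ s', (∑ t, δ s' t) = 1 := by intro s'; simp [hδdef]
  have hδdot : ∀ (s' : σ) (c : σ → ℝ), (∑ t, δ s' t * c t) = c s' := by
    intro s' c
    have : ∀ t, δ s' t * c t = if t = s' then c t else 0 := by
      intro t; by_cases h : t = s' <;> simp [hδdef, h]
    rw [Finset.sum_congr rfl fun t _ => this t, Finset.sum_ite_eq']
    simp
  have hδ0D : δ s₀ ∈ Dset := by
    refine ⟨hδnn s₀, hδsum s₀, fun i => ?_⟩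
    rw [hδdot s₀ fun t => 1 - ζ t i, hs₀ i]
    simpa using hμ i
  -- the primal value set
  set S : Set ℝ := {x : ℝ | ∃ p ∈ Dset, x = ∑ s, p s * Q s} with hS
  have hSne : S.Nonempty := ⟨∑ s, δ s₀ s * Q s, δ s₀, hδ0D, rfl⟩
  have hQmax : ∃ B, ∀ s, Q s ≤ B :=
    ⟨Finset.univ.sup' Finset.univ_nonempty Q, fun s => Finset.le_sup' Q (mem_univ s)⟩
  obtain ⟨B, hB⟩ := hQmax
  have hSbdd : BddAbove S := by
    refine ⟨B, ?_⟩
    rintro x ⟨p, hp, rfl⟩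
    calc ∑ s, p s * Q s ≤ ∑ s, p s * B :=
          Finset.sum_le_sum fun s _ => mul_le_mul_of_nonneg_left (hB s) (hp.1 s)
      _ = B := by rw [← Finset.sum_mul, hp.2.1, one_mul]
  set V : ℝ := sSup S with hV
  -- weak duality
  have weak : ∀ (γ : ℝ) (β : I → ℝ), (∀ i, 0 ≤ β i) →
      (∀ s, Q s ≤ γ + ∑ i, (1 - ζ s i) * β i) →
      ∀ p ∈ Dset, ∑ s, p s * Q s ≤ γ + ∑ i, μ i * β i := by
    intro γ β hβ hfeas p hp
    have step1 : ∑ s, p s * Q s ≤ ∑ s, p s * (γ + ∑ i, (1 - ζ s i) * β i) :=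
      Finset.sum_le_sum fun s _ => mul_le_mul_of_nonneg_left (hfeas s) (hp.1 s)
    have step2 : ∑ s, p s * (γ + ∑ i, (1 - ζ s i) * β i)
        = γ + ∑ i, (∑ s, p s * (1 - ζ s i)) * β i := by
      have : ∀ s, p s * (γ + ∑ i, (1 - ζ s i) * β i)
          = p s * γ + ∑ i, p s * (1 - ζ s i) * β i := by
        intro s
        rw [mul_add, Finset.mul_sum]
        congr 1
        exact Finset.sum_congr rfl fun i _ => (mul_assoc _ _ _).symm
      rw [Finset.sum_congr rfl fun s _ => this s, Finset.sum_add_distrib,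
        ← Finset.sum_mul, hp.2.1, one_mul, Finset.sum_comm]
      congr 1
      exact Finset.sum_congr rfl fun i _ => (Finset.sum_mul _ _ _).symm
    have step3 : ∑ i, (∑ s, p s * (1 - ζ s i)) * β i ≤ ∑ i, μ i * β i :=
      Finset.sum_le_sum fun i _ => mul_le_mul_of_nonneg_right (hp.2.2 i) (hβ i)
    linarith [step1, step2 ▸ step1, step3]
  -- the restricted simplex P
  set P : Set (σ → ℝ) := {p : σ → ℝ | (∀ s, 0 ≤ p s) ∧ (∑ s, p s) = 1 ∧
      ∀ s, (∃ i, μ i = 0 ∧ ζ s i = 0) → p s = 0} with hP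
  have hδP : ∀ s', (∀ i, μ i = 0 → ζ s' i = 1) → δ s' ∈ P := by
    intro s' hs'
    refine ⟨hδnn s', hδsum s', fun s hsbad => ?_⟩
    by_cases h : s = s'
    · rcases hsbad with ⟨i, hμi, hζi⟩
      exact absurd (h ▸ hζi) (by rw [hs' i hμi]; norm_num)
    · simp [hδdef, h]
  -- the open convex set for separation
  set 𝒜 : Set (ℝ × (I → ℝ)) := {x | ∃ p ∈ P, x.1 < ∑ s, p s * Q s ∧
      ∀ i, μ i = 0 ∨ ∑ s, p s * (1 - ζ s i) < x.2 i} with h𝒜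
  have hopen : IsOpen 𝒜 := by
    have : 𝒜 = ⋃ p ∈ P, ({x : ℝ × (I → ℝ) | x.1 < ∑ s, p s * Q s} ∩
        ⋂ i, {x : ℝ × (I → ℝ) | μ i = 0 ∨ ∑ s, p s * (1 - ζ s i) < x.2 i}) := by
      ext x
      simp only [h𝒜, Set.mem_setOf_eq, Set.mem_iUnion, Set.mem_inter_iff, Set.mem_iInter]
      constructor
      · rintro ⟨p, hp, h1, h2⟩; exact ⟨p, hp, h1, h2⟩
      · rintro ⟨p, hp, h1, h2⟩; exact ⟨p, hp, h1, h2⟩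
    rw [this]
    refine isOpen_biUnion fun p _ => IsOpen.inter (isOpen_lt continuous_fst continuous_const) ?_
    refine isOpen_iInter_of_finite fun i => ?_
    by_cases hμi : μ i = 0
    · have : {x : ℝ × (I → ℝ) | μ i = 0 ∨ ∑ s, p s * (1 - ζ s i) < x.2 i}
          = Set.univ := by ext x; simp [hμi]
      rw [this]; exact isOpen_univ
    · have : {x : ℝ × (I → ℝ) | μ i = 0 ∨ ∑ s, p s * (1 - ζ s i) < x.2 i}
          = {x : ℝ × (I → ℝ) | ∑ s, p s * (1 - ζ s i) < x.2 i} := by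
        ext x; simp [hμi]
      rw [this]
      exact isOpen_lt continuous_const ((continuous_apply i).comp continuous_snd)
  have hconv : Convex ℝ 𝒜 := by
    rintro x ⟨p, hp, hx1, hx2⟩ y ⟨q, hq, hy1, hy2⟩ la mb hla hmb hs
    refine ⟨fun s => la * p s + mb * q s, ⟨fun s =>
      add_nonneg (mul_nonneg hla (hp.1 s)) (mul_nonneg hmb (hq.1 s)), ?_, ?_⟩, ?_, ?_⟩
    · rw [Finset.sum_add_distrib, ← Finset.mul_sum, ← Finset.mul_sum, hp.2.1, hq.2.1,
        mul_one, mul_one, hs]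
    · intro s hsbad
      show la * p s + mb * q s = 0
      rw [hp.2.2 s hsbad, hq.2.2 s hsbad]; ring
    · have hsum : ∑ s, (la * p s + mb * q s) * Q s
          = la * ∑ s, p s * Q s + mb * ∑ s, q s * Q s := by
        rw [Finset.mul_sum, Finset.mul_sum, ← Finset.sum_add_distrib]
        exact Finset.sum_congr rfl fun s _ => by ring
      show (la • x + mb • y).1 < _
      rw [hsum]
      have : (la • x + mb • y).1 = la * x.1 + mb * y.1 := by simp
      rw [this]
      exact combo_lt' hla hmb hs hx1 hy1
    · intro i
      rcases hx2 i with hμi | hx2i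
      · exact Or.inl hμi
      rcases hy2 i with hμi | hy2i
      · exact Or.inl hμi
      refine Or.inr ?_
      have hsum : ∑ s, (la * p s + mb * q s) * (1 - ζ s i)
          = la * ∑ s, p s * (1 - ζ s i) + mb * ∑ s, q s * (1 - ζ s i) := by
        rw [Finset.mul_sum, Finset.mul_sum, ← Finset.sum_add_distrib]
        exact Finset.sum_congr rfl fun s _ => by ring
      have h2 : (la • x + mb • y).2 i = la * x.2 i + mb * y.2 i := by simp
      rw [hsum, h2]
      exact combo_lt' hla hmb hs hx2i hy2i
  have hVnotmem : ((V, μ) : ℝ × (I → ℝ)) ∉ 𝒜 := by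
    rintro ⟨p, hp, h1, h2⟩
    have hpD : p ∈ Dset := by
      refine ⟨hp.1, hp.2.1, fun i => ?_⟩
      rcases h2 i with hμi | hlt
      · rw [hμi]
        have : ∑ s, p s * (1 - ζ s i) = 0 := by
          refine Finset.sum_eq_zero fun s _ => ?_
          rcases hζ s i with hz | hz
          · rw [hp.2.2 s ⟨i, hμi, hz⟩, zero_mul]
          · rw [hz]; ring
        rw [this]
      · exact hlt.le
    have : ∑ s, p s * Q s ≤ V := le_csSup hSbdd ⟨p, hpD, rfl⟩
    exact absurd h1 (not_lt.2 this)
  -- separating hyperplane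
  obtain ⟨f, hf⟩ := geometric_hahn_banach_open_point hconv hopen hVnotmem
  set a : ℝ := f (1, 0) with ha
  set b : I → ℝ := fun i => f (0, Pi.single i 1) with hb
  have hflin : ∀ (t : ℝ) (u : I → ℝ), f (t, u) = t * a + ∑ i, u i * b i := by
    intro t u
    have h2' : ∑ i, u i • (Pi.single i (1:ℝ) : I → ℝ) = u := by
      have h3 : ∀ i, u i • (Pi.single i (1:ℝ) : I → ℝ) = Pi.single i (u i) := fun i => by
        rw [← Pi.single_smul, smul_eq_mul, mul_one]
      rw [Finset.sum_congr rfl fun i _ => h3 i, Finset.univ_sum_single]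
    have hdecomp : ((t, u) : ℝ × (I → ℝ))
        = t • (((1:ℝ), (0 : I → ℝ)) : ℝ × (I → ℝ))
          + ∑ i, u i • ((((0:ℝ), (Pi.single i (1:ℝ) : I → ℝ))) : ℝ × (I → ℝ)) := by
      ext
      · simp [Prod.fst_sum]
      · simp only [Prod.snd_add, Prod.snd_sum, Prod.smul_snd, smul_zero, zero_add]
        exact (congrFun h2' _).symm
    rw [hdecomp, map_add, map_smul, map_sum]
    simp only [smul_eq_mul, map_smul]
    rfl
  set C : ℝ := f (V, μ) with hC
  have hCval : C = V * a + ∑ i, μ i * b i := hflin V μ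
  have hsep : ∀ x ∈ 𝒜, f x < C := hf
  -- sample points
  have hsample : ∀ (t : ℝ) (u : I → ℝ), t < Q s₀ → (∀ i, μ i ≠ 0 → 0 < u i) →
      ((t, u) : ℝ × (I → ℝ)) ∈ 𝒜 := by
    intro t u ht hu
    refine ⟨δ s₀, hδP s₀ (fun i _ => hs₀ i), ?_, ?_⟩
    · rw [hδdot s₀ Q]; exact ht
    · intro i
      by_cases hμi : μ i = 0
      · exact Or.inl hμi
      · refine Or.inr ?_
        rw [hδdot s₀ fun t => 1 - ζ t i, hs₀ i]
        simpa using hu i hμi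
  -- a ≥ 0
  have ha0 : 0 ≤ a := by
    by_contra h
    push_neg at h
    set base : ℝ := (Q s₀ - 1) * a + ∑ i, (1:ℝ) * b i with hbase
    set n : ℝ := max 0 ((C + 1 - base) / (-a)) with hn
    have hn0 : 0 ≤ n := le_max_left _ _
    have hmem : ((Q s₀ - 1 - n, fun _ => (1:ℝ)) : ℝ × (I → ℝ)) ∈ 𝒜 :=
      hsample _ _ (by linarith) (fun i _ => one_pos)
    have hval := hsep _ hmem
    rw [hflin] at hval
    have hdiv : (C + 1 - base) / (-a) ≤ n := le_max_right _ _
    have hna : C + 1 - base ≤ n * (-a) := by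
      rwa [div_le_iff₀ (by linarith : (0:ℝ) < -a)] at hdiv
    have : (Q s₀ - 1 - n) * a + ∑ i, (1:ℝ) * b i = base + n * (-a) := by
      rw [hbase]; ring
    rw [this] at hval
    linarith
  -- b ≤ 0
  have hbnonpos : ∀ i, b i ≤ 0 := by
    intro i₀
    by_contra h
    push_neg at h
    set base : ℝ := (Q s₀ - 1) * a + ∑ i, (1:ℝ) * b i with hbase
    set n : ℝ := max 0 ((C + 1 - base) / b i₀) with hn
    have hn0 : 0 ≤ n := le_max_left _ _
    have hmem : ((Q s₀ - 1, fun j => 1 + (if j = i₀ then n else 0)) : ℝ × (I → ℝ)) ∈ 𝒜 := by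
      refine hsample _ _ (by linarith) (fun j _ => ?_)
      by_cases hj : j = i₀ <;> simp [hj] <;> linarith
    have hval := hsep _ hmem
    rw [hflin] at hval
    have hsum : ∑ j, (1 + (if j = i₀ then n else 0)) * b j
        = (∑ j, (1:ℝ) * b j) + n * b i₀ := by
      have : ∀ j, (1 + (if j = i₀ then n else 0)) * b j
          = (1:ℝ) * b j + (if j = i₀ then n * b j else 0) := by
        intro j; by_cases hj : j = i₀ <;> simp [hj] <;> ring
      rw [Finset.sum_congr rfl fun j _ => this j, Finset.sum_add_distrib,
        Finset.sum_ite_eq']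
      simp
    rw [hsum] at hval
    have hdiv : (C + 1 - base) / b i₀ ≤ n := le_max_right _ _
    have hna : C + 1 - base ≤ n * b i₀ := by rwa [div_le_iff₀ h] at hdiv
    have hbeq : (Q s₀ - 1) * a + ((∑ j, (1:ℝ) * b j) + n * b i₀) = base + n * b i₀ := by
      rw [hbase]; ring
    rw [hbeq] at hval
    linarith
  -- main inequality from separation
  have main : ∀ p ∈ P, (∑ s, p s * Q s) * a + ∑ i, (∑ s, p s * (1 - ζ s i)) * b i
      ≤ V * a + ∑ i, μ i * b i := by
    intro p hp
    set L : ℝ := (∑ s, p s * Q s) * a + ∑ i, (∑ s, p s * (1 - ζ s i)) * b i with hL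
    set R : ℝ := V * a + ∑ i, μ i * b i with hR
    set K : ℝ := |a - ∑ i, b i| + 1 with hK
    have hKpos : 0 < K := by positivity
    refine le_of_forall_pos_le_add fun ε' hε' => ?_
    set ε : ℝ := ε' / K with hε
    have hεpos : 0 < ε := div_pos hε' hKpos
    have hmem : ((∑ s, p s * Q s - ε, fun i => (∑ s, p s * (1 - ζ s i)) + ε) :
        ℝ × (I → ℝ)) ∈ 𝒜 := by
      refine ⟨p, hp, ?_, fun i => Or.inr ?_⟩
      · show ∑ s, p s * Q s - ε < ∑ s, p s * Q s
        linarith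
      · show ∑ s, p s * (1 - ζ s i) < ∑ s, p s * (1 - ζ s i) + ε
        linarith
    have hval := hsep _ hmem
    rw [hflin, hCval] at hval
    have hsum : ∑ i, ((∑ s, p s * (1 - ζ s i)) + ε) * b i
        = (∑ i, (∑ s, p s * (1 - ζ s i)) * b i) + ε * ∑ i, b i := by
      rw [Finset.mul_sum, ← Finset.sum_add_distrib]
      exact Finset.sum_congr rfl fun i _ => by ring
    rw [hsum] at hval
    have hstep : L < R + ε * (a - ∑ i, b i) := by
      rw [hL, hR]; linarith
    have habs : ε * (a - ∑ i, b i) ≤ ε' := by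
      have h1 : a - ∑ i, b i ≤ K := by
        rw [hK]; have := le_abs_self (a - ∑ i, b i); linarith
      calc ε * (a - ∑ i, b i) ≤ ε * K := mul_le_mul_of_nonneg_left h1 hεpos.le
        _ = ε' := by rw [hε]; field_simp
    linarith
  -- a > 0
  have hapos : 0 < a := by
    rcases lt_or_eq_of_le ha0 with h | h
    · exact h
    have hmem : ((Q s₀ - 1, fun i => μ i / 2) : ℝ × (I → ℝ)) ∈ 𝒜 := by
      refine ⟨δ s₀, hδP s₀ (fun i _ => hs₀ i), ?_, fun i => ?_⟩
      · rw [hδdot s₀ Q]; linarith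
      · by_cases hμi : μ i = 0
        · exact Or.inl hμi
        · refine Or.inr ?_
          rw [hδdot s₀ fun t => 1 - ζ t i, hs₀ i]
          have : 0 < μ i := lt_of_le_of_ne (hμ i) (Ne.symm hμi)
          simpa using by linarith
    have hval := hsep _ hmem
    rw [hflin, hCval, ← h] at hval
    simp only [mul_zero, zero_add] at hval
    have hhalf : ∑ i, μ i / 2 * b i = (∑ i, μ i * b i) / 2 := by
      rw [Finset.sum_div]
      exact Finset.sum_congr rfl fun i _ => by ring
    rw [hhalf] at hval
    have hT : ∑ i, μ i * b i ≤ 0 :=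
      Finset.sum_nonpos fun i _ => mul_nonpos_of_nonneg_of_nonpos (hμ i) (hbnonpos i)
    linarith
  -- extract the dual solution
  set β' : I → ℝ := fun i => -b i / a with hβ'
  have hβ'nn : ∀ i, 0 ≤ β' i := fun i =>
    div_nonneg (neg_nonneg.2 (hbnonpos i)) hapos.le
  have key : ∀ c : I → ℝ, a * ∑ i, c i * β' i = -∑ i, c i * b i := by
    intro c
    rw [Finset.mul_sum, ← Finset.sum_neg_distrib]
    refine Finset.sum_congr rfl fun i _ => ?_
    rw [hβ']
    field_simp
  set γ : ℝ := V - ∑ i, μ i * β' i with hγ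
  have hfeasσ' : ∀ s, (∀ i, μ i = 0 → ζ s i = 1) →
      Q s ≤ γ + ∑ i, (1 - ζ s i) * β' i := by
    intro s hs'
    have hmain := main (δ s) (hδP s hs')
    rw [hδdot s Q] at hmain
    have hrw : ∀ i, (∑ t, δ s t * (1 - ζ t i)) = 1 - ζ s i := fun i =>
      hδdot s fun t => 1 - ζ t i
    rw [Finset.sum_congr rfl fun i _ => by rw [hrw i]] at hmain
    rw [← mul_le_mul_iff_right₀ hapos]
    have expand : a * (γ + ∑ i, (1 - ζ s i) * β' i)
        = a * V - a * (∑ i, μ i * β' i) + a * ∑ i, (1 - ζ s i) * β' i := by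
      rw [hγ]; ring
    rw [expand, key μ, key (fun i => 1 - ζ s i)]
    linarith
  set M : ℝ := max 0 (Finset.univ.sup' Finset.univ_nonempty (fun s => Q s - γ)) with hM
  have hM0 : 0 ≤ M := le_max_left _ _
  have hMQ : ∀ s, Q s - γ ≤ M :=
    fun s => le_max_of_le_right (Finset.le_sup' (fun s => Q s - γ) (mem_univ s))
  set β : I → ℝ := fun i => β' i + (if μ i = 0 then M else 0) with hβdef
  have hβnn : ∀ i, 0 ≤ β i := by
    intro i
    by_cases hμi : μ i = 0 <;> simp [hβdef, hμi] <;>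
      [exact add_nonneg (hβ'nn i) hM0; exact hβ'nn i]
  have hβge : ∀ i, β' i ≤ β i := by
    intro i
    by_cases hμi : μ i = 0 <;> simp [hβdef, hμi]; linarith [hM0]
  have hfeas : ∀ s, Q s ≤ γ + ∑ i, (1 - ζ s i) * β i := by
    intro s
    by_cases hss : ∀ i, μ i = 0 → ζ s i = 1
    · have h1 := hfeasσ' s hss
      have h2 : ∑ i, (1 - ζ s i) * β' i ≤ ∑ i, (1 - ζ s i) * β i :=
        Finset.sum_le_sum fun i _ =>
          mul_le_mul_of_nonneg_left (hβge i) (hznn s i)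
      linarith
    · push_neg at hss
      obtain ⟨i₀, hμi₀, hζi₀'⟩ := hss
      have hζi₀ : ζ s i₀ = 0 := (hζ s i₀).resolve_right hζi₀'
      have hterm : (1 - ζ s i₀) * β i₀ ≤ ∑ i, (1 - ζ s i) * β i :=
        Finset.single_le_sum (fun i _ => mul_nonneg (hznn s i) (hβnn i)) (mem_univ i₀)
      have hval : (1 - ζ s i₀) * β i₀ = β' i₀ + M := by
        rw [hζi₀, hβdef]; simp [hμi₀]
      have := hMQ s
      have := hβ'nn i₀
      rw [hval] at hterm
      linarith
  have hobj : γ + ∑ i, μ i * β i = V := by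
    have hsplit : ∑ i, μ i * β i = ∑ i, μ i * β' i := by
      refine Finset.sum_congr rfl fun i _ => ?_
      by_cases hμi : μ i = 0 <;> simp [hβdef, hμi]
    rw [hsplit, hγ]; ring
  -- conclusion
  refine ⟨V, ⟨⟨γ, β, hβnn, hfeas, hobj.symm⟩, ?_⟩, rfl⟩
  rintro x ⟨γ', β'', hβ''nn, hfeas'', rfl⟩
  exact csSup_le hSne (by rintro y ⟨p, hp, rfl⟩; exact weak γ' β'' hβ''nn hfeas'' p hp)
end

section
/- (Reformulation of the two-stage distributionally robust model as a single robust problem.) The two-stage distributionally robust optimal value equals the optimal value of the combined min–max problem: min_{g ∈ 𝒢} sup_{p ∈ D(g)} Σ_{s∈σ(g)} p(s)·Q_g(s) = inf over all pairs (g, β) with g ∈ 𝒢 and β : I → ℝ, β_i ≥ 0 for all i, of max_{s∈σ(g)} [ Q_g(s) + Σ_{i∈I} (μ_i + ζ_g(s)_i − 1)·β_i ]. -/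
open Finset Set Pointwise

/-- A small helper: if `α + t * w < u` for all `t ≥ 0`, then `w ≤ 0`. -/
lemma aux_nonpos {α u w : ℝ} (h : ∀ t : ℝ, 0 ≤ t → α + t * w < u) : w ≤ 0 := by
  by_contra hw
  push_neg at hw
  have h0 : α < u := by simpa using h 0 le_rfl
  have ht : (0:ℝ) ≤ (u - α) / w := div_nonneg (by linarith) hw.le
  have := h ((u - α) / w) ht
  rw [div_mul_cancel₀ _ (ne_of_gt hw)] at this
  linarith

/-- Approximate LP strong duality over the simplex. -/
lemma aux_duality {S ι : Type*} [Fintype S] [Nonempty S] [Fintype ι]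
    (a : S → ι → ℝ) (ha : ∀ s i, 0 ≤ a s i) (μ : ι → ℝ) (hμ : ∀ i, 0 ≤ μ i)
    (c : S → ℝ) (s₀ : S) (hs₀ : ∀ i, a s₀ i = 0)
    (v ε : ℝ) (hε : 0 < ε)
    (hv : ∀ p : S → ℝ, (∀ s, 0 ≤ p s) → (∑ s, p s) = 1 →
      (∀ i, (∑ s, p s * a s i) ≤ μ i) → (∑ s, p s * c s) ≤ v) :
    ∃ β : ι → ℝ, (∀ i, 0 ≤ β i) ∧ ∀ s, c s + ∑ i, (μ i - a s i) * β i ≤ v + ε := by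
  classical
  -- the linear map p ↦ (A p, c ⬝ p)
  let L : (S → ℝ) →ₗ[ℝ] (ι → ℝ) × ℝ :=
    { toFun := fun p => (fun i => ∑ s, p s * a s i, ∑ s, p s * c s)
      map_add' := by
        intro p q
        refine Prod.ext ?_ ?_
        · funext i
          simp [add_mul, Finset.sum_add_distrib]
        · simp [add_mul, Finset.sum_add_distrib]
      map_smul' := by
        intro r p
        refine Prod.ext ?_ ?_
        · funext i
          simp [Finset.mul_sum, mul_assoc]
        · simp [Finset.mul_sum, mul_assoc] }
  let K : Set ((ι → ℝ) × ℝ) := {x | (∀ i, 0 ≤ x.1 i) ∧ x.2 ≤ 0}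
  let C : Set ((ι → ℝ) × ℝ) := (L '' stdSimplex ℝ S) + K
  have hKconv : Convex ℝ K := by
    intro x hx y hy θ η hθ hη hθη
    refine ⟨fun i => ?_, ?_⟩
    · exact add_nonneg (mul_nonneg hθ (hx.1 i)) (mul_nonneg hη (hy.1 i))
    · have : θ * x.2 + η * y.2 ≤ 0 :=
        add_nonpos (mul_nonpos_of_nonneg_of_nonpos hθ hx.2)
          (mul_nonpos_of_nonneg_of_nonpos hη hy.2)
      simpa using this
  have hKclosed : IsClosed K := by
    have h1 : IsClosed {x : (ι → ℝ) × ℝ | ∀ i, 0 ≤ x.1 i} := by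
      have : {x : (ι → ℝ) × ℝ | ∀ i, 0 ≤ x.1 i} = ⋂ i, {x | 0 ≤ x.1 i} := by
        ext x; simp
      rw [this]
      exact isClosed_iInter fun i =>
        isClosed_le continuous_const ((continuous_apply i).comp continuous_fst)
    have h2 : IsClosed {x : (ι → ℝ) × ℝ | x.2 ≤ 0} :=
      isClosed_le continuous_snd continuous_const
    exact h1.inter h2
  have hcomp : IsCompact (L '' stdSimplex ℝ S) :=
    (isCompact_stdSimplex ℝ S).image L.continuous_of_finiteDimensional
  have hCconv : Convex ℝ C :=
    ((convex_stdSimplex ℝ S).linear_image L).add hKconv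
  have hCclosed : IsClosed C := hKclosed.add_left_of_isCompact hcomp
  -- the point (μ, v + ε) is not in C
  have hx : ((μ, v + ε) : (ι → ℝ) × ℝ) ∉ C := by
    intro hmem
    rw [Set.mem_add] at hmem
    obtain ⟨z, ⟨p, hp, rfl⟩, k, hk, hzk⟩ := hmem
    have h1 : ∀ i, (∑ s, p s * a s i) ≤ μ i := by
      intro i
      have := congrArg (fun x => x.1 i) hzk
      simp only [Prod.fst_add] at this
      have hki := hk.1 i
      simp only [Pi.add_apply] at this
      dsimp [L] at this
      nlinarith [hk.1 i]
    have h2 : v + ε ≤ ∑ s, p s * c s := by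
      have := congrArg (fun x => x.2) hzk
      simp only [Prod.snd_add] at this
      dsimp [L] at this
      linarith [hk.2]
    have := hv p (fun s => hp.1 s) hp.2 h1
    linarith
  obtain ⟨f, u, hfu, hux⟩ := geometric_hahn_banach_closed_point hCconv hCclosed hx
  -- decompose f
  set γ : ℝ := f (0, 1) with hγdef
  set b : ι → ℝ := fun i => f (Pi.single i 1, 0) with hbdef
  have hf : ∀ (y : ι → ℝ) (r : ℝ), f (y, r) = (∑ i, y i * b i) + r * γ := by
    intro y r
    have h1 : ((y, r) : (ι → ℝ) × ℝ)
        = (∑ i, y i • ((Pi.single i 1 : ι → ℝ), (0:ℝ))) + r • ((0 : ι → ℝ), (1:ℝ)) := by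
      refine Prod.ext ?_ ?_
      · simp only [Prod.fst_add, Prod.fst_sum, Prod.smul_fst, Prod.smul_snd, smul_eq_mul]
        funext j
        simp [Finset.sum_apply, Pi.single_apply, mul_ite]
      · simp [Prod.snd_sum]
    have h2 : ∀ i : ι, f (y i • ((Pi.single i 1 : ι → ℝ), (0:ℝ))) = y i * b i := by
      intro i; rw [map_smul]; simp [b]
    have h3 : f (r • ((0 : ι → ℝ), (1:ℝ))) = r * γ := by rw [map_smul]; simp [γ]
    rw [h1, map_add, map_sum, h3]
    simp only [h2]
  -- the base point L δ_{s₀} has value (0, c s₀)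
  have hδmem : ∀ s : S, (fun t => if t = s then (1:ℝ) else 0) ∈ stdSimplex ℝ S := by
    intro s
    constructor
    · intro t; dsimp; split <;> norm_num
    · simp
  have hLδ : ∀ s : S, L (fun t => if t = s then (1:ℝ) else 0) = ((fun i => a s i), c s) := by
    intro s
    refine Prod.ext ?_ ?_
    · funext i
      simp [L, ite_mul]
    · simp [L, ite_mul]
  have hz : ∀ s : S, (((fun i => a s i), c s) : (ι → ℝ) × ℝ) ∈ C := by
    intro s
    exact Set.mem_add.mpr ⟨_, ⟨_, hδmem s, hLδ s⟩, 0, ⟨fun i => le_rfl, le_rfl⟩, add_zero _⟩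
  -- strict inequalities at vertices
  have hvert : ∀ s : S, (∑ i, a s i * b i) + c s * γ < u := by
    intro s
    have := hfu _ (hz s)
    rwa [hf] at this
  have hμu : u < (∑ i, μ i * b i) + (v + ε) * γ := by
    have := hux
    rwa [hf] at this
  -- sign of γ : consider (0, c s₀) + (0, -t)
  have hγ : 0 ≤ γ := by
    have h : ∀ t : ℝ, 0 ≤ t → ((∑ i, a s₀ i * b i) + c s₀ * γ) + t * (-γ) < u := by
      intro t ht
      have hmem : ((((fun i => a s₀ i) : ι → ℝ), c s₀) + ((0 : ι → ℝ), -t)) ∈ C := by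
        obtain ⟨z, hz', k, hk, hzk⟩ := Set.mem_add.mp (hz s₀)
        refine Set.mem_add.mpr ⟨z, hz', k + ((0 : ι → ℝ), -t),
          ⟨fun i => by simpa using hk.1 i, ?_⟩, by rw [← add_assoc, hzk]⟩
        have := hk.2
        simp only [Prod.snd_add]
        nlinarith
      have := hfu _ hmem
      rw [map_add, hf, hf] at this
      simp only [Pi.zero_apply, zero_mul, Finset.sum_const_zero, zero_add] at this
      linarith
    have := aux_nonpos h
    linarith
  -- sign of b i
  have hb : ∀ i, b i ≤ 0 := by
    intro i
    have h : ∀ t : ℝ, 0 ≤ t → ((∑ j, a s₀ j * b j) + c s₀ * γ) + t * (b i) < u := by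
      intro t ht
      have hmem : ((((fun j => a s₀ j) : ι → ℝ), c s₀)
          + (((fun j => t * (if j = i then (1:ℝ) else 0)) : ι → ℝ), (0:ℝ))) ∈ C := by
        obtain ⟨z, hz', k, hk, hzk⟩ := Set.mem_add.mp (hz s₀)
        refine Set.mem_add.mpr ⟨z, hz',
          k + (((fun j => t * (if j = i then (1:ℝ) else 0)) : ι → ℝ), (0:ℝ)),
          ⟨fun j => ?_, by simpa using hk.2⟩, by rw [← add_assoc, hzk]⟩
        have h1 := hk.1 j
        have h2 : (0:ℝ) ≤ t * (if j = i then (1:ℝ) else 0) :=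
          mul_nonneg ht (by split <;> norm_num)
        simpa using add_nonneg h1 h2
      have := hfu _ hmem
      rw [map_add, hf, hf] at this
      have he : (∑ j, (t * (if j = i then (1:ℝ) else 0)) * b j) = t * b i := by
        rw [Finset.sum_eq_single i]
        · simp
        · intro j _ hj
          simp [hj]
        · simp
      rw [he] at this
      linarith
    exact aux_nonpos h
  -- case split on γ
  rcases eq_or_lt_of_le hγ with hγ0 | hγpos
  · -- γ = 0: contradiction
    exfalso
    have h1 : (0:ℝ) < u := by
      have := hvert s₀
      simp only [hs₀, zero_mul, Finset.sum_const_zero, ← hγ0, mul_zero, add_zero, zero_add]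
        at this
      linarith
    have h2 : (∑ i, μ i * b i) ≤ 0 :=
      Finset.sum_nonpos fun i _ => mul_nonpos_of_nonneg_of_nonpos (hμ i) (hb i)
    rw [← hγ0] at hμu
    simp only [mul_zero, add_zero] at hμu
    linarith
  · refine ⟨fun i => (-b i) / γ, fun i => div_nonneg (by linarith [hb i]) hγpos.le, fun s => ?_⟩
    have key : γ * (c s + ∑ i, (μ i - a s i) * ((-b i) / γ)) < γ * (v + ε) := by
      have he : γ * (c s + ∑ i, (μ i - a s i) * ((-b i) / γ))
          = c s * γ + ∑ i, (a s i - μ i) * b i := by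
        rw [mul_add, Finset.mul_sum]
        congr 1
        · ring
        · refine Finset.sum_congr rfl fun i _ => ?_
          rw [mul_comm γ, mul_assoc, div_mul_cancel₀ _ (ne_of_gt hγpos)]
          ring
      have hsplit : (∑ i, (a s i - μ i) * b i) = (∑ i, a s i * b i) - ∑ i, μ i * b i := by
        rw [← Finset.sum_sub_distrib]
        exact Finset.sum_congr rfl fun i _ => by ring
      rw [he, hsplit]
      have := hvert s
      have := hμu
      nlinarith
    have := (mul_lt_mul_iff_right₀ hγpos).mp key
    linarith

/-- The two-stage distributionally robust model equals the
combined min–max robust reformulation. -/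
theorem stmt_4
    {I G : Type*} [Fintype I] [Nonempty I] [Fintype G] [Nonempty G]
    (μ : I → ℝ) (hμ : ∀ i, 0 ≤ μ i)
    (σ : G → Type*) [∀ g, Fintype (σ g)] [∀ g, Nonempty (σ g)]
    (ζ : (g : G) → σ g → I → ℝ) (hζ : ∀ g s i, ζ g s i = 0 ∨ ζ g s i = 1)
    (Q : (g : G) → σ g → ℝ)
    (s₀ : (g : G) → σ g) (hs₀ : ∀ g i, ζ g (s₀ g) i = 1)
    (D : (g : G) → Set (σ g → ℝ))
    (hD : ∀ g, D g = {p : σ g → ℝ | (∀ s, 0 ≤ p s) ∧ (∑ s, p s) = 1 ∧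
        ∀ i, (∑ s, p s * (1 - ζ g s i)) ≤ μ i}) :
    (⨅ g : G, sSup {x : ℝ | ∃ p ∈ D g, x = ∑ s, p s * Q g s}) =
      sInf {x : ℝ | ∃ (g : G) (β : I → ℝ), (∀ i, 0 ≤ β i) ∧
        x = ⨆ s : σ g, (Q g s + ∑ i, (μ i + ζ g s i - 1) * β i)} := by
  classical
  set P : G → Set ℝ := fun g => {x : ℝ | ∃ p ∈ D g, x = ∑ s, p s * Q g s} with hP
  set R : Set ℝ := {x : ℝ | ∃ (g : G) (β : I → ℝ), (∀ i, 0 ≤ β i) ∧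
      x = ⨆ s : σ g, (Q g s + ∑ i, (μ i + ζ g s i - 1) * β i)} with hR
  -- the Dirac measure at s₀ g is in D g
  have hδ : ∀ g : G, (fun t => if t = s₀ g then (1:ℝ) else 0) ∈ D g := by
    intro g
    rw [hD]
    refine ⟨fun t => by dsimp; split <;> norm_num, by simp, fun i => ?_⟩
    have : (∑ s : σ g, (if s = s₀ g then (1:ℝ) else 0) * (1 - ζ g s i))
        = 1 - ζ g (s₀ g) i := by
      rw [Finset.sum_eq_single (s₀ g)]
      · simp
      · intro s _ hs; simp [hs]
      · simp
    rw [this, hs₀]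
    simpa using hμ i
  have hPne : ∀ g : G, (P g).Nonempty := fun g => ⟨_, _, hδ g, rfl⟩
  have hPbdd : ∀ g : G, BddAbove (P g) := by
    intro g
    obtain ⟨M, hM⟩ := Finite.bddAbove_range (Q g)
    refine ⟨M, ?_⟩
    rintro x ⟨p, hp, rfl⟩
    rw [hD] at hp
    calc (∑ s, p s * Q g s) ≤ ∑ s, p s * M := by
          refine Finset.sum_le_sum fun s _ => ?_
          exact mul_le_mul_of_nonneg_left (hM ⟨s, rfl⟩) (hp.1 s)
      _ = M := by rw [← Finset.sum_mul, hp.2.1, one_mul]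
  -- weak duality
  have weak : ∀ x ∈ R, (⨅ g : G, sSup (P g)) ≤ x := by
    rintro x ⟨g, β, hβ, rfl⟩
    refine le_trans (ciInf_le (Finite.bddBelow_range _) g) ?_
    refine csSup_le (hPne g) ?_
    rintro y ⟨p, hp, rfl⟩
    rw [hD] at hp
    obtain ⟨hp0, hp1, hpc⟩ := hp
    have h1 : ∀ s : σ g, Q g s + ∑ i, (μ i + ζ g s i - 1) * β i
        ≤ ⨆ s : σ g, (Q g s + ∑ i, (μ i + ζ g s i - 1) * β i) :=
      fun s => le_ciSup (f := fun s : σ g => Q g s + ∑ i, (μ i + ζ g s i - 1) * β i)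
        (Finite.bddAbove_range _) s
    calc (∑ s, p s * Q g s)
        ≤ ∑ s, p s * (Q g s + ∑ i, (μ i + ζ g s i - 1) * β i) := by
          have : (∑ s, p s * (Q g s + ∑ i, (μ i + ζ g s i - 1) * β i))
              = (∑ s, p s * Q g s)
                + ∑ i, ((∑ s, p s * (μ i + ζ g s i - 1)) * β i) := by
            simp only [mul_add, Finset.sum_add_distrib]
            congr 1
            calc (∑ s, p s * ∑ i, (μ i + ζ g s i - 1) * β i)
                = ∑ s, ∑ i, p s * ((μ i + ζ g s i - 1) * β i) := by
                  exact Finset.sum_congr rfl fun s _ => Finset.mul_sum _ _ _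
              _ = ∑ i, ∑ s, p s * ((μ i + ζ g s i - 1) * β i) := Finset.sum_comm
              _ = ∑ i, ((∑ s, p s * (μ i + ζ g s i - 1)) * β i) := by
                  refine Finset.sum_congr rfl fun i _ => ?_
                  rw [Finset.sum_mul]
                  exact Finset.sum_congr rfl fun s _ => by ring
          rw [this]
          have hnn : ∀ i, 0 ≤ (∑ s, p s * (μ i + ζ g s i - 1)) * β i := by
            intro i
            refine mul_nonneg ?_ (hβ i)
            have : (∑ s, p s * (μ i + ζ g s i - 1))
                = μ i - ∑ s, p s * (1 - ζ g s i) := by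
              have : (∑ s, p s * (μ i + ζ g s i - 1))
                  = (∑ s, p s) * μ i - ∑ s, p s * (1 - ζ g s i) := by
                rw [Finset.sum_mul, ← Finset.sum_sub_distrib]
                refine Finset.sum_congr rfl fun s _ => by ring
              rw [this, hp1, one_mul]
            rw [this]
            linarith [hpc i]
          exact le_add_of_nonneg_right (Finset.sum_nonneg fun i _ => hnn i)
      _ ≤ ∑ s, p s * (⨆ s : σ g, (Q g s + ∑ i, (μ i + ζ g s i - 1) * β i)) := by
          refine Finset.sum_le_sum fun s _ => ?_
          exact mul_le_mul_of_nonneg_left (h1 s) (hp0 s)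
      _ = ⨆ s : σ g, (Q g s + ∑ i, (μ i + ζ g s i - 1) * β i) := by
          rw [← Finset.sum_mul, hp1, one_mul]
  have hRne : R.Nonempty := by
    obtain ⟨g⟩ := ‹Nonempty G›
    exact ⟨_, g, 0, fun i => le_rfl, rfl⟩
  have hRbdd : BddBelow R := ⟨_, weak⟩
  refine le_antisymm (le_csInf hRne weak) (le_of_forall_pos_le_add ?_)
  intro ε hε
  -- strong duality
  obtain ⟨g₀, hg₀⟩ := Finite.exists_min (fun g => sSup (P g))
  have hinf : (⨅ g : G, sSup (P g)) = sSup (P g₀) :=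
    le_antisymm (ciInf_le (Finite.bddBelow_range _) g₀) (le_ciInf hg₀)
  obtain ⟨β, hβ, hβle⟩ := aux_duality (fun s i => 1 - ζ g₀ s i)
    (fun s i => by rcases hζ g₀ s i with h | h <;> rw [h] <;> norm_num) μ hμ
    (Q g₀) (s₀ g₀) (fun i => by simp [hs₀]) (sSup (P g₀)) ε hε
    (fun p hp0 hp1 hpc => le_csSup (hPbdd g₀) ⟨p, by rw [hD]; exact ⟨hp0, hp1, hpc⟩, rfl⟩)
  have hx : (⨆ s : σ g₀, (Q g₀ s + ∑ i, (μ i + ζ g₀ s i - 1) * β i)) ∈ R :=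
    ⟨g₀, β, hβ, rfl⟩
  refine le_trans (csInf_le hRbdd hx) ?_
  rw [hinf]
  refine ciSup_le fun s => ?_
  have := hβle s
  calc Q g₀ s + ∑ i, (μ i + ζ g₀ s i - 1) * β i
      = Q g₀ s + ∑ i, (μ i - (1 - ζ g₀ s i)) * β i := by
        congr 1
        exact Finset.sum_congr rfl fun i _ => by ring
    _ ≤ sSup (P g₀) + ε := this
end

section
/- (Unit-demand flow conservation forces reachability.) Let V be a finite vertex set, s ∈ V, and f : V → V → ℝ with f(m, n) ≥ 0 for all m, n ∈ V. Suppose that for every vertex n ∈ V with n ≠ s, the net inflow at n equals one: Σ_{m∈V} f(m, n) − Σ_{m∈V} f(n, m) = 1. Then every vertex n ∈ V is reachable from s along arcs carrying positive flow, i.e., for every n ∈ V there is a finite sequence s = v₀, v₁, …, v_k = n with f(v_{j}, v_{j+1}) > 0 for all j (equivalently, the reflexive–transitive closure of the relation 'f(a, b) > 0' relates s to n). -/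
/-- Unit-demand flow conservation forces reachability from the
root along arcs carrying positive flow. -/
theorem stmt_10
    {V : Type*} [Fintype V]
    (s : V) (f : V → V → ℝ)
    (hf : ∀ m n : V, 0 ≤ f m n)
    (hcons : ∀ n : V, n ≠ s → (∑ m, f m n) - (∑ m, f n m) = 1) :
    ∀ n : V, Relation.ReflTransGen (fun a b => 0 < f a b) s n := by
  classical
  by_contra h
  push_neg at h
  obtain ⟨n₀, hn₀⟩ := h
  set R : Finset V := Finset.univ.filter
    (fun v => Relation.ReflTransGen (fun a b => 0 < f a b) s v) with hR
  have hmemR : ∀ v, v ∈ R ↔ Relation.ReflTransGen (fun a b => 0 < f a b) s v := by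
    intro v; simp [hR]
  have hcompl : ∀ v ∈ Rᶜ, v ≠ s := by
    intro v hv heq
    rw [Finset.mem_compl, hmemR] at hv
    exact hv (heq ▸ Relation.ReflTransGen.refl)
  have hnonempty : n₀ ∈ Rᶜ := by
    rw [Finset.mem_compl, hmemR]; exact hn₀
  have hcross : ∀ m ∈ R, ∀ n ∈ Rᶜ, f m n = 0 := by
    intro m hm n hn
    by_contra hne
    have hpos : 0 < f m n := lt_of_le_of_ne (hf m n) (Ne.symm hne)
    rw [hmemR] at hm
    rw [Finset.mem_compl, hmemR] at hn
    exact hn (hm.tail hpos)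
  have key : (∑ n ∈ Rᶜ, ((∑ m, f m n) - (∑ m, f n m))) = (Rᶜ.card : ℝ) := by
    rw [Finset.sum_congr rfl (fun n hn => hcons n (hcompl n hn))]
    simp
  have expand : (∑ n ∈ Rᶜ, ((∑ m, f m n) - (∑ m, f n m)))
      = (∑ n ∈ Rᶜ, ∑ m ∈ R, f m n) - (∑ n ∈ Rᶜ, ∑ m ∈ R, f n m) := by
    rw [Finset.sum_sub_distrib]
    have h1 : (∑ n ∈ Rᶜ, ∑ m, f m n)
        = (∑ n ∈ Rᶜ, ∑ m ∈ R, f m n) + ∑ n ∈ Rᶜ, ∑ m ∈ Rᶜ, f m n := by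
      rw [← Finset.sum_add_distrib]
      exact Finset.sum_congr rfl fun n _ => (Finset.sum_add_sum_compl R _).symm
    have h2 : (∑ n ∈ Rᶜ, ∑ m, f n m)
        = (∑ n ∈ Rᶜ, ∑ m ∈ R, f n m) + ∑ n ∈ Rᶜ, ∑ m ∈ Rᶜ, f n m := by
      rw [← Finset.sum_add_distrib]
      exact Finset.sum_congr rfl fun n _ => (Finset.sum_add_sum_compl R _).symm
    have h3 : (∑ n ∈ Rᶜ, ∑ m ∈ Rᶜ, f m n) = ∑ n ∈ Rᶜ, ∑ m ∈ Rᶜ, f n m :=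
      Finset.sum_comm
    rw [h1, h2, h3]; ring
  have hzero : (∑ n ∈ Rᶜ, ∑ m ∈ R, f m n) = 0 :=
    Finset.sum_eq_zero fun n hn => Finset.sum_eq_zero fun m hm => hcross m hm n hn
  have hnonneg : 0 ≤ ∑ n ∈ Rᶜ, ∑ m ∈ R, f n m :=
    Finset.sum_nonneg fun n _ => Finset.sum_nonneg fun m _ => hf n m
  have hle : (Rᶜ.card : ℝ) ≤ 0 := by
    rw [← key, expand, hzero]; linarith
  have hpos : 0 < (Rᶜ.card : ℝ) := by
    have := Finset.card_pos.mpr ⟨n₀, hnonempty⟩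
    exact_mod_cast this
  linarith
end

section
/- (Correctness of the single-commodity flow formulation, forward direction.) Let V be a finite vertex set, s ∈ V, and G a simple graph on V with exactly |V| − 1 edges. Suppose there exists f : V → V → ℝ with f(m, n) ≥ 0 for all m, n, such that f(m, n) = 0 whenever m and n are not adjacent in G, and such that for every vertex n ≠ s the net inflow equals one: Σ_{m∈V} f(m, n) − Σ_{m∈V} f(n, m) = 1. Then G is a tree (connected and acyclic), i.e., G is a spanning tree of the candidate network. -/
open SimpleGraph in
lemma my_reach_del {V : Type*} {G : SimpleGraph V} {v w : V}
    (h : (G \ SimpleGraph.fromEdgeSet {s(v, w)}).Reachable v w) :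
    ∀ a b : V, G.Reachable a b → (G \ SimpleGraph.fromEdgeSet {s(v, w)}).Reachable a b := by
  intro a b ⟨p⟩
  induction p with
  | nil => exact Reachable.refl _
  | @cons a x b hadj q ih =>
    refine Reachable.trans ?_ ih
    by_cases he : s(a, x) = s(v, w)
    · rw [Sym2.eq_iff] at he
      rcases he with ⟨rfl, rfl⟩ | ⟨rfl, rfl⟩
      · exact h
      · exact h.symm
    · exact SimpleGraph.Adj.reachable (by simp [hadj, he, hadj.ne])

lemma my_conn_card {V : Type*} [Fintype V] :
    ∀ (k : ℕ) (G : SimpleGraph V) [Fintype G.edgeSet],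
      G.edgeFinset.card ≤ k → G.Connected → Fintype.card V ≤ G.edgeFinset.card + 1 := by
  classical
  intro k
  induction k with
  | zero =>
    intro G _ hle hconn
    by_cases hac : G.IsAcyclic
    · exact le_of_eq (SimpleGraph.IsTree.card_edgeFinset ⟨hconn, hac⟩).symm
    · exfalso
      simp only [SimpleGraph.IsAcyclic, not_forall, not_not] at hac
      obtain ⟨u, c, hc⟩ := hac
      cases c with
      | nil => exact hc.not_of_nil
      | cons hadj q =>
        have : s(u, _) ∈ G.edgeSet := G.mem_edgeSet.mpr hadj
        have hmem : s(u, _) ∈ G.edgeFinset := SimpleGraph.mem_edgeFinset.mpr this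
        have := Finset.card_pos.mpr ⟨_, hmem⟩
        omega
  | succ k ih =>
    intro G _ hle hconn
    by_cases hac : G.IsAcyclic
    · exact le_of_eq (SimpleGraph.IsTree.card_edgeFinset ⟨hconn, hac⟩).symm
    · simp only [SimpleGraph.IsAcyclic, not_forall, not_not] at hac
      obtain ⟨u, c, hc⟩ := hac
      cases c with
      | nil => exact absurd hc (fun h => h.not_of_nil)
      | @cons _ x _ hadj q =>
        set e := s(u, x) with he
        have hecyc : e ∈ (SimpleGraph.Walk.cons hadj q).edges := by simp [he]
        have hreach : (G \ SimpleGraph.fromEdgeSet {e}).Reachable u x :=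
          (SimpleGraph.adj_and_reachable_delete_edges_iff_exists_cycle.mpr
            ⟨u, SimpleGraph.Walk.cons hadj q, hc, hecyc⟩).2
        set G' := G \ SimpleGraph.fromEdgeSet {e} with hG'
        have hne : Nonempty V := hconn.nonempty
        have hconn' : G'.Connected :=
          SimpleGraph.Connected.mk fun a b => my_reach_del hreach a b (hconn.preconnected a b)
        have hES : G'.edgeSet = G.edgeSet \ {e} := by
          rw [hG', SimpleGraph.edgeSet_sdiff, SimpleGraph.edgeSet_fromEdgeSet,
            SimpleGraph.edgeSet_sdiff_sdiff_isDiag]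
        have : Fintype G'.edgeSet := Fintype.ofFinite _
        have hcard' : G'.edgeFinset.card = G.edgeFinset.card - 1 := by
          have h1 : G'.edgeFinset = G.edgeFinset.erase e := by
            ext a
            simp only [SimpleGraph.mem_edgeFinset, Finset.mem_erase, hES, Set.mem_diff,
              Set.mem_singleton_iff]
            tauto
          rw [h1, Finset.card_erase_of_mem (SimpleGraph.mem_edgeFinset.mpr hadj)]
        have hemem : e ∈ G.edgeFinset := SimpleGraph.mem_edgeFinset.mpr hadj
        have hpos : 1 ≤ G.edgeFinset.card := Finset.card_pos.mpr ⟨e, hemem⟩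
        have := ih G' (by omega) hconn'
        omega

/-- Correctness of the single-commodity flow formulation,
forward direction: a graph with |V| - 1 edges supporting a unit-demand flow
rooted at s is a spanning tree. -/
theorem stmt_11
    {V : Type*} [Fintype V]
    (s : V) (G : SimpleGraph V) [Fintype G.edgeSet]
    (hcard : G.edgeFinset.card = Fintype.card V - 1)
    (hflow : ∃ f : V → V → ℝ,
        (∀ m n : V, 0 ≤ f m n) ∧
        (∀ m n : V, ¬ G.Adj m n → f m n = 0) ∧
        (∀ n : V, n ≠ s → (∑ m, f m n) - (∑ m, f n m) = 1)) :
    G.IsTree := by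
  classical
  obtain ⟨f, hpos, hzero, hcons⟩ := hflow
  have key : ∀ v, G.Reachable s v := by
    by_contra h
    push_neg at h
    set S : Finset V := Finset.univ.filter (fun n => ¬ G.Reachable s n) with hS
    have hmem : ∀ n, n ∈ S ↔ ¬ G.Reachable s n := by
      intro n; simp [hS]
    have hSne : S.Nonempty := by
      obtain ⟨v, hv⟩ := h; exact ⟨v, (hmem v).2 hv⟩
    have hnoadj : ∀ m n : V, (m ∈ S) ≠ (n ∈ S) → f m n = 0 := by
      intro m n hmn
      apply hzero
      intro hadj
      rcases Decidable.em (m ∈ S) with hm | hm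
      · have hn : n ∉ S := fun hn => hmn (by simp [hm, hn])
        have hrn : G.Reachable s n := not_not.mp ((hmem n).not.mp (by simpa using hn))
        exact ((hmem m).1 hm) (hrn.trans hadj.symm.reachable)
      · have hn : n ∈ S := by
          by_contra hn; exact hmn (by simp [hm, hn])
        have hrm : G.Reachable s m := not_not.mp ((hmem m).not.mp (by simpa using hm))
        exact ((hmem n).1 hn) (hrm.trans hadj.reachable)
    have hin : ∀ n ∈ S, (∑ m, f m n) = ∑ m ∈ S, f m n := by
      intro n hn
      rw [← Finset.sum_add_sum_compl S (fun m => f m n)]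
      have : ∑ m ∈ Sᶜ, f m n = 0 := by
        apply Finset.sum_eq_zero
        intro m hm
        exact hnoadj m n (by simp [Finset.mem_compl.mp hm, hn])
      rw [this, add_zero]
    have hout : ∀ n ∈ S, (∑ m, f n m) = ∑ m ∈ S, f n m := by
      intro n hn
      rw [← Finset.sum_add_sum_compl S (fun m => f n m)]
      have : ∑ m ∈ Sᶜ, f n m = 0 := by
        apply Finset.sum_eq_zero
        intro m hm
        exact hnoadj n m (by simp [Finset.mem_compl.mp hm, hn])
      rw [this, add_zero]
    have hT0 : ∑ n ∈ S, ((∑ m, f m n) - (∑ m, f n m)) = 0 := by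
      calc ∑ n ∈ S, ((∑ m, f m n) - (∑ m, f n m))
          = ∑ n ∈ S, ((∑ m ∈ S, f m n) - (∑ m ∈ S, f n m)) := by
            apply Finset.sum_congr rfl
            intro n hn; rw [hin n hn, hout n hn]
        _ = (∑ n ∈ S, ∑ m ∈ S, f m n) - (∑ n ∈ S, ∑ m ∈ S, f n m) := by
            rw [Finset.sum_sub_distrib]
        _ = 0 := by rw [Finset.sum_comm]; ring
    have hT1 : ∑ n ∈ S, ((∑ m, f m n) - (∑ m, f n m)) = (S.card : ℝ) := by
      have : ∀ n ∈ S, (∑ m, f m n) - (∑ m, f n m) = 1 := by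
        intro n hn
        refine hcons n fun hns => (hmem n).1 hn ?_
        rw [hns]
      rw [Finset.sum_congr rfl this]
      simp
    have : (S.card : ℝ) = 0 := by rw [← hT1, hT0]
    have : S.card = 0 := by exact_mod_cast this
    exact hSne.card_ne_zero this
  have hconn : G.Connected := by
    rw [SimpleGraph.connected_iff]
    exact ⟨fun u v => (key u).symm.trans (key v), ⟨s⟩⟩
  refine ⟨hconn, ?_⟩
  by_contra hac
  simp only [SimpleGraph.IsAcyclic, not_forall, not_not] at hac
  obtain ⟨u, c, hc⟩ := hac
  cases c with
  | nil => exact hc.not_of_nil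
  | @cons _ x _ hadj q =>
    set e := s(u, x) with he
    have hecyc : e ∈ (SimpleGraph.Walk.cons hadj q).edges := by simp [he]
    have hreach : (G \ SimpleGraph.fromEdgeSet {e}).Reachable u x :=
      (SimpleGraph.adj_and_reachable_delete_edges_iff_exists_cycle.mpr
        ⟨u, SimpleGraph.Walk.cons hadj q, hc, hecyc⟩).2
    set G' := G \ SimpleGraph.fromEdgeSet {e} with hG'
    have hne : Nonempty V := ⟨s⟩
    have hconn' : G'.Connected :=
      SimpleGraph.Connected.mk fun a b => my_reach_del hreach a b (hconn.preconnected a b)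
    have hES : G'.edgeSet = G.edgeSet \ {e} := by
      rw [hG', SimpleGraph.edgeSet_sdiff, SimpleGraph.edgeSet_fromEdgeSet,
        SimpleGraph.edgeSet_sdiff_sdiff_isDiag]
    have : Fintype G'.edgeSet := Fintype.ofFinite _
    have hcard' : G'.edgeFinset.card = G.edgeFinset.card - 1 := by
      have h1 : G'.edgeFinset = G.edgeFinset.erase e := by
        ext a
        simp only [SimpleGraph.mem_edgeFinset, Finset.mem_erase, hES, Set.mem_diff,
          Set.mem_singleton_iff]
        tauto
      rw [h1, Finset.card_erase_of_mem (SimpleGraph.mem_edgeFinset.mpr hadj)]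
    have hemem : e ∈ G.edgeFinset := SimpleGraph.mem_edgeFinset.mpr hadj
    have hpos1 : 1 ≤ G.edgeFinset.card := Finset.card_pos.mpr ⟨e, hemem⟩
    have hle := my_conn_card G'.edgeFinset.card G' le_rfl hconn'
    have hV : 1 ≤ Fintype.card V := Fintype.card_pos_iff.mpr ⟨s⟩
    omega
end

section
/- (Correctness of the single-commodity flow formulation, converse direction.) Let V be a finite vertex set, G a tree on V (a connected acyclic simple graph), and s ∈ V. Then there exists f : V → V → ℝ such that: f(m, n) ≥ 0 for all m, n ∈ V; f(m, n) = 0 whenever m and n are not adjacent in G; f(m, n) ≤ |V| − 1 for all m, n ∈ V; Σ_{n∈V} f(s, n) − Σ_{n∈V} f(n, s) = |V| − 1; and for every vertex n ≠ s the net inflow equals one: Σ_{m∈V} f(m, n) − Σ_{m∈V} f(n, m) = 1. -/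
open SimpleGraph Finset

noncomputable def flowOf {V : Type*} [DecidableEq V] {G : SimpleGraph V} {a b : V}
    (w : G.Walk a b) (m n : V) : ℝ :=
  (((w.darts.map SimpleGraph.Dart.toProd).count (m, n)) : ℕ)

lemma count_beq_congr {V : Type*} [DecidableEq V] (x : V × V) (l : List (V × V)) :
    @List.count _ instBEqProd x l = @List.count _ instBEqOfDecidableEq x l := by
  induction l with
  | nil => rfl
  | cons b l ih =>
    rw [@List.count_cons _ instBEqProd, @List.count_cons _ instBEqOfDecidableEq, ih]
    by_cases h : x = b <;> simp [h, instBEqOfDecidableEq]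

lemma flowOf_nonneg {V : Type*} [DecidableEq V] {G : SimpleGraph V} {a b : V}
    (w : G.Walk a b) (m n : V) : 0 ≤ flowOf w m n := by
  unfold flowOf; positivity

lemma flowOf_eq_zero {V : Type*} [DecidableEq V] {G : SimpleGraph V} {a b : V}
    (w : G.Walk a b) {m n : V} (h : ¬ G.Adj m n) : flowOf w m n = 0 := by
  unfold flowOf
  norm_cast
  rw [List.count_eq_zero]
  intro hc
  obtain ⟨⟨⟨x, y⟩, hadj⟩, hd, hdp⟩ := List.mem_map.mp hc
  simp only [SimpleGraph.Dart.toProd, Prod.mk.injEq] at hdp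
  obtain ⟨rfl, rfl⟩ := hdp
  exact h hadj

lemma flowOf_le_one {V : Type*} [DecidableEq V] {G : SimpleGraph V} {a b : V}
    {w : G.Walk a b} (hw : w.IsPath) (m n : V) : flowOf w m n ≤ 1 := by
  unfold flowOf
  have hnd : (w.darts.map SimpleGraph.Dart.toProd).Nodup :=
    (SimpleGraph.Walk.darts_nodup_of_support_nodup hw.support_nodup).map
      SimpleGraph.Dart.toProd_injective
  rw [count_beq_congr]
  rw [← count_beq_congr]
  exact_mod_cast List.nodup_iff_count_le_one.mp hnd (m, n)

lemma flowOf_conserv {V : Type*} [DecidableEq V] [Fintype V] {G : SimpleGraph V} {a b : V}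
    (w : G.Walk a b) (n : V) :
    (∑ m, flowOf w m n) - (∑ m, flowOf w n m)
      = (if n = b then 1 else 0) - (if n = a then 1 else 0) := by
  induction w with
  | nil => simp [flowOf]
  | @cons a c b h p ih =>
    have hf : ∀ m k : V, flowOf (SimpleGraph.Walk.cons h p) m k
        = flowOf p m k + (if (m, k) = (a, c) then 1 else 0) := by
      intro m k
      unfold flowOf
      rw [SimpleGraph.Walk.darts_cons, List.map_cons, List.count_cons]
      push_cast
      congr 1
      by_cases hmk : (m, k) = (a, c) <;> simp [SimpleGraph.Dart.toProd, hmk] <;> aesop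
    simp only [hf, Finset.sum_add_distrib]
    have h1 : (∑ m : V, (if ((m, n) : V × V) = (a, c) then (1:ℝ) else 0))
        = if n = c then 1 else 0 := by
      by_cases hnc : n = c <;> simp [Prod.ext_iff, hnc, Finset.filter_eq']
    have h2 : (∑ m : V, (if ((n, m) : V × V) = (a, c) then (1:ℝ) else 0))
        = if n = a then 1 else 0 := by
      by_cases hna : n = a <;> simp [Prod.ext_iff, hna, Finset.filter_eq']
    rw [h1, h2]
    split_ifs at ih ⊢ <;> linarith

/-- Correctness of the single-commodity flow formulation,
converse direction: every tree supports a unit-demand flow rooted at s. -/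
theorem stmt_12
    {V : Type*} [Fintype V]
    (G : SimpleGraph V) (hG : G.IsTree) (s : V) :
    ∃ f : V → V → ℝ,
      (∀ m n : V, 0 ≤ f m n) ∧
      (∀ m n : V, ¬ G.Adj m n → f m n = 0) ∧
      (∀ m n : V, f m n ≤ (Fintype.card V : ℝ) - 1) ∧
      ((∑ n, f s n) - (∑ n, f n s) = (Fintype.card V : ℝ) - 1) ∧
      (∀ n : V, n ≠ s → (∑ m, f m n) - (∑ m, f n m) = 1) := by
  classical
  have hpath : ∀ v : V, ∃ p : G.Walk s v, p.IsPath := fun v =>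
    (hG.existsUnique_path s v).exists
  choose P hP using hpath
  have hPs : P s = SimpleGraph.Walk.nil :=
    (hG.existsUnique_path s s).unique (hP s) SimpleGraph.Walk.IsPath.nil
  have key : ∀ n : V, (∑ m, ∑ v, flowOf (P v) m n) - (∑ m, ∑ v, flowOf (P v) n m)
      = ∑ v : V, ((if n = v then (1:ℝ) else 0) - (if n = s then 1 else 0)) := by
    intro n
    rw [Finset.sum_comm, Finset.sum_comm (f := fun m v => flowOf (P v) n m),
      ← Finset.sum_sub_distrib]
    exact Finset.sum_congr rfl fun v _ => flowOf_conserv (P v) n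
  refine ⟨fun m n => ∑ v, flowOf (P v) m n, ?_, ?_, ?_, ?_, ?_⟩
  · intro m n; exact Finset.sum_nonneg fun v _ => flowOf_nonneg _ m n
  · intro m n h; exact Finset.sum_eq_zero fun v _ => flowOf_eq_zero _ h
  · intro m n
    have h0 : flowOf (P s) m n = 0 := by rw [hPs]; simp [flowOf]
    have hc1 : 1 ≤ Fintype.card V := Fintype.card_pos_iff.mpr ⟨s⟩
    calc ∑ v, flowOf (P v) m n
        = ∑ v ∈ Finset.univ.erase s, flowOf (P v) m n := by
          rw [← Finset.add_sum_erase _ _ (Finset.mem_univ s), h0, zero_add]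
      _ ≤ ∑ v ∈ Finset.univ.erase s, 1 := Finset.sum_le_sum
          fun v _ => flowOf_le_one (hP v) m n
      _ = (Fintype.card V : ℝ) - 1 := by
          rw [Finset.sum_const, Finset.card_erase_of_mem (Finset.mem_univ s),
            nsmul_eq_mul, mul_one, Finset.card_univ, Nat.cast_sub hc1, Nat.cast_one]
  · have := key s
    simp only [Finset.sum_sub_distrib, Finset.sum_ite_eq, Finset.mem_univ, if_true,
      Finset.sum_const, Finset.card_univ, nsmul_eq_mul, mul_one] at this
    linarith
  · intro n hn
    have := key n
    simp only [Finset.sum_sub_distrib, Finset.sum_ite_eq, Finset.mem_univ, if_true,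
      if_neg hn, Finset.sum_const, Finset.card_univ, nsmul_eq_mul, mul_one,
      mul_zero, Finset.sum_const_zero] at this
    linarith
end
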